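/- Let f be continuously differentiable on the finite interval [a,b] with ∫_a^b f(x) dx = 0. Then ∫_a^b f'(x)^2 dx ≥ (π/(b-a))^2 · ∫_a^b f(x)^2 dx. -/

import Mathlib

open Real
open MeasureTheory Set intervalIntegral
open scoped ENNReal NNReal

lemma liftIoc_measurable {T : ℝ} [hT : Fact (0 < T)] (t : ℝ) (φ : ℝ → ℂ) (hφ : Measurable φ) :
    Measurable (AddCircle.liftIoc T t φ) := by
  have h : AddCircle.liftIoc T t φ =
      (fun x : Set.Ioc t (t+T) => φ x) ∘ (AddCircle.measurableEquivIoc T t) := rfl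
  rw [h]
  exact (hφ.comp measurable_subtype_coe).comp (AddCircle.measurableEquivIoc T t).measurable

lemma algebra_aux (S Tc pc Ic Nc : ℂ) :
    1/Tc * -(Tc/(-2*pc*Ic*Nc) * S) = Tc/(2*pc*Ic*Nc) * (1/Tc * S) := by
  rw [show (-2*pc*Ic*Nc) = -(2*pc*Ic*Nc) by ring, div_neg]
  ring

lemma reflInt (a b : ℝ) (φ : ℝ → ℝ) : ∫ x in (2*a-b)..a, φ (2*a-x) = ∫ x in a..b, φ x := by
  rw [intervalIntegral.integral_comp_sub_left (a := 2*a-b) (b := a) φ (2*a),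
    show 2*a-a = a by ring, show 2*a-(2*a-b) = b by ring]

/-- Poincaré–Wirtinger inequality on `[a,b]`: if `f` is continuously differentiable
on `[a,b]` with zero mean, then `∫ f'² ≥ (π/(b-a))² ∫ f²`. -/
theorem wirtinger_interval (a b : ℝ) (hab : a < b) (f f' : ℝ → ℝ)
    (hderiv : ∀ x ∈ Set.Icc a b, HasDerivAt f (f' x) x)
    (hcont : ContinuousOn f' (Set.Icc a b))
    (hmean : ∫ x in a..b, f x = 0) :
    ∫ x in a..b, (f' x) ^ 2 ≥ (π / (b - a)) ^ 2 * ∫ x in a..b, (f x) ^ 2 := by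
  have hL : 0 < b - a := sub_pos.mpr hab
  obtain ⟨T, hTdef⟩ : ∃ T : ℝ, T = 2*(b-a) := ⟨_, rfl⟩
  haveI hTfact : Fact (0 < T) := ⟨by rw [hTdef]; linarith⟩
  obtain ⟨a', ha'def⟩ : ∃ x : ℝ, x = 2*a - b := ⟨_, rfl⟩
  have hab' : a' + T = b := by rw [hTdef, ha'def]; ring
  have ha'b : a' < b := by rw [ha'def]; linarith
  have ha'a : a' ≤ a := by rw [ha'def]; linarith
  have hfc : ContinuousOn f (Set.Icc a b) := fun x hx =>
    (hderiv x hx).continuousAt.continuousWithinAt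
  set c : ℝ → ℝ := fun x => max a (min b x) with hcdef
  have hc_mem : ∀ x, c x ∈ Set.Icc a b := fun x =>
    ⟨le_max_left _ _, max_le hab.le (min_le_left _ _)⟩
  have hc_id : ∀ x ∈ Set.Icc a b, c x = x := fun x hx => by
    rw [hcdef]; simp only [min_eq_right hx.2, max_eq_right hx.1]
  have hc_cont : Continuous c := continuous_const.max (continuous_const.min continuous_id)
  set g0 : ℝ → ℝ := fun x => f (c x) with hg0def
  set g1 : ℝ → ℝ := fun x => f' (c x) with hg1def
  have hg0 : Continuous g0 := hfc.comp_continuous hc_cont hc_mem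
  have hg1 : Continuous g1 := hcont.comp_continuous hc_cont hc_mem
  set Gr : ℝ → ℝ := fun x => if x ≤ a then g0 (2*a - x) else g0 x with hGrdef
  set Hr : ℝ → ℝ := fun x => if x ≤ a then -g1 (2*a - x) else g1 x with hHrdef
  set G : ℝ → ℂ := fun x => (Gr x : ℂ) with hGdef
  set H : ℝ → ℂ := fun x => (Hr x : ℂ) with hHdef
  have hGr_cont : Continuous Gr := by
    rw [hGrdef]
    exact Continuous.if_le (hg0.comp (continuous_const.sub continuous_id)) hg0
      continuous_id continuous_const (fun x hx => by rw [hx, show 2*a - a = a by ring])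
  have hG_cont : Continuous G := Complex.continuous_ofReal.comp hGr_cont
  have hHr_meas : Measurable Hr := by
    rw [hHrdef]
    exact Measurable.ite (measurableSet_le measurable_id measurable_const)
      ((hg1.comp (continuous_const.sub continuous_id)).neg.measurable) hg1.measurable
  have hH_meas : Measurable H := Complex.measurable_ofReal.comp hHr_meas
  -- circle lifts
  set Gc : AddCircle T → ℂ := AddCircle.liftIoc T a' G with hGcdef
  set Hc : AddCircle T → ℂ := AddCircle.liftIoc T a' H with hHcdef
  have hGc_meas : Measurable Gc := liftIoc_measurable a' G hG_cont.measurable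
  have hHc_meas : Measurable Hc := liftIoc_measurable a' H hH_meas
  -- bounds
  obtain ⟨C0, hC0⟩ := isCompact_Icc.exists_bound_of_continuousOn hfc
  obtain ⟨C1, hC1⟩ := isCompact_Icc.exists_bound_of_continuousOn hcont
  have hGbd : ∀ x, ‖G x‖ ≤ C0 := by
    intro x
    have h1 : ∀ y, ‖(g0 y : ℂ)‖ ≤ C0 := fun y => by
      rw [Complex.norm_real]; exact hC0 _ (hc_mem y)
    rw [hGdef]; simp only [hGrdef]
    by_cases hx : x ≤ a
    · rw [if_pos hx]; exact h1 _
    · rw [if_neg hx]; exact h1 _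
  have hHbd : ∀ x, ‖H x‖ ≤ C1 := by
    intro x
    have h1 : ∀ y, ‖(g1 y : ℂ)‖ ≤ C1 := fun y => by
      rw [Complex.norm_real]; exact hC1 _ (hc_mem y)
    rw [hHdef]; simp only [hHrdef]
    by_cases hx : x ≤ a
    · rw [if_pos hx]; push_cast; rw [norm_neg]; exact h1 _
    · rw [if_neg hx]; exact h1 _
  have hGc_mem : MemLp Gc 2 AddCircle.haarAddCircle := by
    refine MemLp.of_bound hGc_meas.aestronglyMeasurable C0 (ae_of_all _ fun z => ?_)
    obtain ⟨x, -, hx⟩ : ∃ x, x ∈ Set.Ioc a' (a'+T) ∧ Gc z = G x := by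
      rw [hGcdef]
      exact ⟨(AddCircle.equivIoc T a' z : ℝ), (AddCircle.equivIoc T a' z).2, rfl⟩
    rw [hx]; exact hGbd x
  have hHc_mem : MemLp Hc 2 AddCircle.haarAddCircle := by
    refine MemLp.of_bound hHc_meas.aestronglyMeasurable C1 (ae_of_all _ fun z => ?_)
    obtain ⟨x, -, hx⟩ : ∃ x, x ∈ Set.Ioc a' (a'+T) ∧ Hc z = H x := by
      rw [hHcdef]
      exact ⟨(AddCircle.equivIoc T a' z : ℝ), (AddCircle.equivIoc T a' z).2, rfl⟩
    rw [hx]; exact hHbd x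
  -- Parseval
  have circ_int : ∀ (φ : ℝ → ℂ),
      (∫ z, ‖AddCircle.liftIoc T a' φ z‖^2 ∂AddCircle.haarAddCircle)
        = (1/T) * ∫ x in Set.Ioc a' b, ‖φ x‖^2 := by
    intro φ
    have h1 : (∫ x in Set.Ioc a' (a'+T), ‖AddCircle.liftIoc T a' φ ↑x‖^2)
        = ∫ z, ‖AddCircle.liftIoc T a' φ z‖^2 ∂(volume) :=
      AddCircle.integral_preimage T a' (fun z => ‖AddCircle.liftIoc T a' φ z‖^2)
    have h2 : (∫ z, ‖AddCircle.liftIoc T a' φ z‖^2 ∂(volume : Measure (AddCircle T)))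
        = T * ∫ z, ‖AddCircle.liftIoc T a' φ z‖^2 ∂AddCircle.haarAddCircle := by
      rw [AddCircle.volume_eq_smul_haarAddCircle, MeasureTheory.integral_smul_measure,
        ENNReal.toReal_ofReal hTfact.out.le, smul_eq_mul]
    have h3 : (∫ x in Set.Ioc a' (a'+T), ‖AddCircle.liftIoc T a' φ ↑x‖^2)
        = ∫ x in Set.Ioc a' b, ‖φ x‖^2 := by
      rw [setIntegral_congr_fun measurableSet_Ioc
        (fun x hx => by rw [AddCircle.liftIoc_coe_apply hx]), hab']
    have hT0 : (T:ℝ) ≠ 0 := ne_of_gt hTfact.out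
    rw [← h3, h1, h2]; field_simp
  have parseval : ∀ (φc : AddCircle T → ℂ) (hm : MemLp φc 2 AddCircle.haarAddCircle),
      (∑' n : ℤ, ‖fourierCoeff φc n‖^2)
        = ∫ z, ‖φc z‖^2 ∂AddCircle.haarAddCircle := by
    intro φc hm
    have hae := hm.coeFn_toLp
    have hco : ∀ n, fourierCoeff (⇑(MemLp.toLp φc hm)) n = fourierCoeff φc n := fun n =>
      integral_congr_ae (hae.mono fun x hx => by simp only [hx])
    have hps := tsum_sq_fourierCoeff (MemLp.toLp φc hm)
    have h2 : (∫ z, ‖(⇑(MemLp.toLp φc hm) : AddCircle T → ℂ) z‖^2 ∂AddCircle.haarAddCircle)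
        = ∫ z, ‖φc z‖^2 ∂AddCircle.haarAddCircle :=
      integral_congr_ae (hae.mono fun x hx => by simp only [hx])
    rw [h2] at hps
    rw [← hps]
    exact tsum_congr fun n => by rw [hco n]
  have parsevalG : (∑' n : ℤ, ‖fourierCoeff Gc n‖^2)
      = (1/T) * ∫ x in Set.Ioc a' b, ‖G x‖^2 := by
    rw [parseval Gc hGc_mem, hGcdef, circ_int G]
  have parsevalH : (∑' n : ℤ, ‖fourierCoeff Hc n‖^2)
      = (1/T) * ∫ x in Set.Ioc a' b, ‖H x‖^2 := by
    rw [parseval Hc hHc_mem, hHcdef, circ_int H]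
  have sumH : Summable (fun n : ℤ => ‖fourierCoeff Hc n‖^2) := by
    have hco : ∀ n, fourierCoeff Hc n = fourierBasis.repr (MemLp.toLp Hc hHc_mem) n := fun n => by
      rw [fourierBasis_repr]
      exact (integral_congr_ae ((hHc_mem.coeFn_toLp).mono fun x hx => by simp only [hx])).symm
    have h := lp.memℓp (fourierBasis.repr (MemLp.toLp Hc hHc_mem))
    rw [memℓp_gen_iff (p := 2) (by norm_num)] at h
    refine h.congr fun n => ?_
    rw [show ((2:ℝ≥0∞).toReal) = ((2:ℕ):ℝ) by norm_num, Real.rpow_natCast, ← hco n]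
  -- pointwise descriptions
  have hGr_Icc : ∀ x ∈ Set.Icc a b, Gr x = f x := by
    intro x hx
    by_cases hxa : x ≤ a
    · have hxa' : x = a := le_antisymm hxa hx.1
      simp only [hGrdef, if_pos hxa, hxa', show 2*a - a = a by ring, hg0def]
      rw [hc_id a (Set.left_mem_Icc.mpr hab.le)]
      simp
    · simp only [hGrdef, if_neg hxa, hg0def]
      rw [hc_id x hx]
  have hrefl_mem : ∀ x ∈ Set.Icc a' a, (2*a - x) ∈ Set.Icc a b := by
    intro x hx
    constructor
    · linarith [hx.2]
    · have := hx.1; rw [ha'def] at this; linarith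
  have hg0_refl : ∀ x ∈ Set.Icc a' a, g0 (2*a - x) = f (2*a - x) := by
    intro x hx; simp only [hg0def]; rw [hc_id _ (hrefl_mem x hx)]
  have hg1_refl : ∀ x ∈ Set.Icc a' a, g1 (2*a - x) = f' (2*a - x) := by
    intro x hx; simp only [hg1def]; rw [hc_id _ (hrefl_mem x hx)]
  have hGr_left : ∀ x ∈ Set.Icc a' a, Gr x = g0 (2*a - x) := by
    intro x hx; simp only [hGrdef, if_pos hx.2]
  have hHr_left : ∀ x ∈ Set.Icc a' a, Hr x = -g1 (2*a - x) := by
    intro x hx; simp only [hHrdef, if_pos hx.2]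
  have hHr_Ioc : ∀ x ∈ Set.Ioc a b, Hr x = f' x := by
    intro x hx
    simp only [hHrdef, if_neg (not_le.mpr hx.1), hg1def]
    rw [hc_id x (Set.mem_Icc_of_Ioc hx)]
  have normsq : ∀ r : ℝ, ‖((r:ℝ):ℂ)‖^2 = r^2 := fun r => by
    rw [Complex.norm_real, Real.norm_eq_abs, sq_abs]
  -- interval reductions for squares
  have refl_g0 : (∫ x in a'..a, (g0 (2*a - x))^2) = ∫ x in a..b, (g0 x)^2 := by
    rw [ha'def]; exact reflInt a b (fun x => (g0 x)^2)
  have refl_g1 : (∫ x in a'..a, (g1 (2*a - x))^2) = ∫ x in a..b, (g1 x)^2 := by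
    rw [ha'def]; exact reflInt a b (fun x => (g1 x)^2)
  have int_g0 : (∫ x in a..b, (g0 x)^2) = ∫ x in a..b, (f x)^2 := by
    refine intervalIntegral.integral_congr fun x hx => ?_
    rw [Set.uIcc_of_le hab.le] at hx
    rw [hg0def]; simp only [hc_id x hx]
  have int_g1 : (∫ x in a..b, (g1 x)^2) = ∫ x in a..b, (f' x)^2 := by
    refine intervalIntegral.integral_congr fun x hx => ?_
    rw [Set.uIcc_of_le hab.le] at hx
    rw [hg1def]; simp only [hc_id x hx]
  have JG : (∫ x in Set.Ioc a' b, ‖G x‖^2) = 2 * ∫ x in a..b, (f x)^2 := by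
    have e : ∀ x, ‖G x‖^2 = Gr x^2 := fun x => by simp only [hGdef]; exact normsq _
    simp only [e]
    rw [← Set.Ioc_union_Ioc_eq_Ioc ha'a hab.le,
      setIntegral_union (f := fun x => Gr x ^ 2) (Set.Ioc_disjoint_Ioc_of_le le_rfl) measurableSet_Ioc
        ((hGr_cont.pow 2).integrableOn_Ioc) ((hGr_cont.pow 2).integrableOn_Ioc)]
    have p1 : (∫ x in Set.Ioc a' a, Gr x^2) = ∫ x in a..b, (f x)^2 := by
      rw [setIntegral_congr_fun measurableSet_Ioc
        (fun x hx => by show Gr x^2 = (g0 (2*a - x))^2; rw [hGr_left x (Set.mem_Icc_of_Ioc hx)] :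
          Set.EqOn (fun x => Gr x^2) (fun x => (g0 (2*a - x))^2) (Set.Ioc a' a)),
        ← intervalIntegral.integral_of_le ha'a, refl_g0, int_g0]
    have p2 : (∫ x in Set.Ioc a b, Gr x^2) = ∫ x in a..b, (f x)^2 := by
      rw [setIntegral_congr_fun measurableSet_Ioc
        (fun x hx => by show Gr x^2 = (f x)^2; rw [hGr_Icc x (Set.mem_Icc_of_Ioc hx)] :
          Set.EqOn (fun x => Gr x^2) (fun x => (f x)^2) (Set.Ioc a b)),
        ← intervalIntegral.integral_of_le hab.le]
    rw [p1, p2]; ring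
  have JH : (∫ x in Set.Ioc a' b, ‖H x‖^2) = 2 * ∫ x in a..b, (f' x)^2 := by
    have e : ∀ x, ‖H x‖^2 = Hr x^2 := fun x => by simp only [hHdef]; exact normsq _
    simp only [e]
    have hHr2 : ∀ s : Set ℝ, MeasurableSet s → IntegrableOn (fun x => Hr x^2) s volume →
        True := fun _ _ _ => trivial
    have hint1 : IntegrableOn (fun x => Hr x^2) (Set.Ioc a' a) volume := by
      have hcr : Continuous (fun y : ℝ => (g1 (2*a - y))^2) := by fun_prop
      refine (IntegrableOn.congr_fun (hcr.integrableOn_Ioc) ?_ measurableSet_Ioc)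
      intro x hx
      show ((fun y => (g1 (2*a - y))) x)^2 = Hr x^2
      rw [hHr_left x (Set.mem_Icc_of_Ioc hx)]
      ring
    have hint2 : IntegrableOn (fun x => Hr x^2) (Set.Ioc a b) volume := by
      refine (IntegrableOn.congr_fun ((hg1.pow 2).integrableOn_Ioc) ?_ measurableSet_Ioc)
      intro x hx
      show (g1 x)^2 = Hr x^2
      simp only [hHrdef, if_neg (not_le.mpr hx.1)]
    rw [← Set.Ioc_union_Ioc_eq_Ioc ha'a hab.le,
      setIntegral_union (Set.Ioc_disjoint_Ioc_of_le le_rfl) measurableSet_Ioc hint1 hint2]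
    have p1 : (∫ x in Set.Ioc a' a, Hr x^2) = ∫ x in a..b, (f' x)^2 := by
      rw [setIntegral_congr_fun measurableSet_Ioc
        (fun x hx => by show Hr x^2 = (g1 (2*a - x))^2; rw [hHr_left x (Set.mem_Icc_of_Ioc hx)]; ring :
          Set.EqOn (fun x => Hr x^2) (fun x => (g1 (2*a - x))^2) (Set.Ioc a' a)),
        ← intervalIntegral.integral_of_le ha'a, refl_g1, int_g1]
    have p2 : (∫ x in Set.Ioc a b, Hr x^2) = ∫ x in a..b, (f' x)^2 := by
      rw [setIntegral_congr_fun measurableSet_Ioc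
        (fun x hx => by show Hr x^2 = (f' x)^2; rw [hHr_Ioc x hx] :
          Set.EqOn (fun x => Hr x^2) (fun x => (f' x)^2) (Set.Ioc a b)),
        ← intervalIntegral.integral_of_le hab.le]
    rw [p1, p2]; ring
  have hfour_cont : ∀ m : ℤ, Continuous fun x : ℝ => (fourier m (x : AddCircle T) : ℂ) :=
    fun m => (map_continuous (fourier m)).comp (AddCircle.continuous_mk' T)
  have coeff_int : ∀ (φ : ℝ → ℂ) (n : ℤ), fourierCoeff (AddCircle.liftIoc T a' φ) n
      = (1/T : ℝ) • ∫ x in a'..b, (fourier (-n) (x : AddCircle T)) * φ x := by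
    intro φ n
    rw [fourierCoeff_eq_intervalIntegral (AddCircle.liftIoc T a' φ) n a']
    congr 1
    rw [intervalIntegral.integral_of_le (by rw [hab']; exact ha'b.le : a' ≤ a' + T),
      intervalIntegral.integral_of_le ha'b.le, ← hab']
    refine setIntegral_congr_fun measurableSet_Ioc fun x hx => ?_
    rw [smul_eq_mul, AddCircle.liftIoc_coe_apply hx]
  have coeffG : ∀ n : ℤ, fourierCoeff Gc n
      = (1/T : ℝ) • ∫ x in a'..b, (fourier (-n) (x : AddCircle T)) * G x := fun n => by
    rw [hGcdef]; exact coeff_int G n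
  have coeffH : ∀ n : ℤ, fourierCoeff Hc n
      = (1/T : ℝ) • ∫ x in a'..b, (fourier (-n) (x : AddCircle T)) * H x := fun n => by
    rw [hHcdef]; exact coeff_int H n
  have refl_g0' : (∫ x in a'..a, g0 (2*a - x)) = ∫ x in a..b, g0 x := by
    rw [ha'def]; exact reflInt a b g0
  have int_g0' : (∫ x in a..b, g0 x) = ∫ x in a..b, f x := by
    refine intervalIntegral.integral_congr fun x hx => ?_
    rw [Set.uIcc_of_le hab.le] at hx
    simp only [hg0def]; rw [hc_id x hx]
  have cg0 : fourierCoeff Gc 0 = 0 := by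
    rw [coeffG 0]
    have e0 : (∫ x in a'..b, (fourier (-(0:ℤ)) (x : AddCircle T)) * G x)
        = ∫ x in a'..b, G x := by
      refine intervalIntegral.integral_congr fun x hx => ?_
      norm_num
    have h3 : (∫ x in a'..b, G x) = (∫ x in a'..a, G x) + ∫ x in a..b, G x :=
      (intervalIntegral.integral_add_adjacent_intervals
        (hG_cont.intervalIntegrable a' a) (hG_cont.intervalIntegrable a b)).symm
    have h1 : (∫ x in a'..a, G x) = ((∫ x in a'..a, g0 (2*a - x) : ℝ) : ℂ) := by
      rw [← intervalIntegral.integral_ofReal]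
      refine intervalIntegral.integral_congr fun x hx => ?_
      rw [Set.uIcc_of_le ha'a] at hx
      simp only [hGdef]; rw [hGr_left x hx]
    have h2 : (∫ x in a..b, G x) = ((∫ x in a..b, f x : ℝ) : ℂ) := by
      rw [← intervalIntegral.integral_ofReal]
      refine intervalIntegral.integral_congr fun x hx => ?_
      rw [Set.uIcc_of_le hab.le] at hx
      simp only [hGdef]; rw [hGr_Icc x hx]
    rw [e0, h3, h1, h2, refl_g0', int_g0', hmean]
    norm_num
  have hrel : ∀ n : ℤ, n ≠ 0 →
      fourierCoeff Gc n = ((T:ℂ)/(2*(π:ℂ)*Complex.I*(n:ℂ))) * fourierCoeff Hc n := by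
    intro n hn
    have hF : ∀ y : ℝ,
        HasDerivAt (fun y : ℝ => (T:ℂ)/(-2*(π:ℂ)*Complex.I*(n:ℂ)) * fourier (-n) (y : AddCircle T))
          (fourier (-n) (y : AddCircle T)) y := fun y =>
      has_antideriv_at_fourier_neg hTfact hn y
    set c0 : ℂ := (T:ℂ)/(-2*(π:ℂ)*Complex.I*(n:ℂ)) with hc0def
    set F : ℝ → ℂ := fun y => c0 * fourier (-n) (y : AddCircle T) with hFdef
    have hFcont : Continuous F := by
      rw [hFdef]; exact continuous_const.mul (hfour_cont (-n))
    -- integrability of derivatives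
    have hf'int : IntervalIntegrable (fun x => (f' x : ℂ)) volume a b := by
      apply ContinuousOn.intervalIntegrable
      rw [Set.uIcc_of_le hab.le]
      exact Complex.continuous_ofReal.comp_continuousOn hcont
    have hrefl_cont : ContinuousOn (fun x => (-(f' (2*a - x)) : ℂ)) (Set.Icc a' a) := by
      have : ContinuousOn (fun x : ℝ => f' (2*a - x)) (Set.Icc a' a) :=
        hcont.comp ((continuous_const.sub continuous_id).continuousOn) (fun x hx => hrefl_mem x hx)
      exact ((Complex.continuous_ofReal.comp_continuousOn this.neg)).congr
        (fun x hx => by simp [Function.comp])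
    have hreflint : IntervalIntegrable (fun x => (-(f' (2*a - x)) : ℂ)) volume a' a := by
      apply ContinuousOn.intervalIntegrable
      rw [Set.uIcc_of_le ha'a]
      exact hrefl_cont
    -- integration by parts on [a, b]
    have hub : ∀ x ∈ Set.uIcc a b, HasDerivAt (fun y => (f y : ℂ)) ((f' x : ℂ)) x := by
      intro x hx; rw [Set.uIcc_of_le hab.le] at hx
      exact (hderiv x hx).ofReal_comp
    have ibp2 := intervalIntegral.integral_mul_deriv_eq_deriv_mul hub (fun x _ => hF x) hf'int
      ((hfour_cont (-n)).intervalIntegrable a b)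
    -- integration by parts on [a', a]
    have hua : ∀ x ∈ Set.uIcc a' a,
        HasDerivAt (fun y => (f (2*a - y) : ℂ)) ((-(f' (2*a - x)) : ℂ)) x := by
      intro x hx; rw [Set.uIcc_of_le ha'a] at hx
      exact HasDerivAt.comp_const_sub (2*a) x
        ((hderiv (2*a - x) (hrefl_mem x hx)).ofReal_comp)
    have ibp1 := intervalIntegral.integral_mul_deriv_eq_deriv_mul hua (fun x _ => hF x) hreflint
      ((hfour_cont (-n)).intervalIntegrable a' a)
    -- names for the derivative-side integrals
    set J1 : ℂ := ∫ x in a'..a, (fourier (-n) (x : AddCircle T)) * (-(f' (2*a - x)) : ℂ) with hJ1def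
    set J2 : ℂ := ∫ x in a..b, (fourier (-n) (x : AddCircle T)) * (f' x : ℂ) with hJ2def
    -- boundary cancellation
    have hcoeB : ((b : ℝ) : AddCircle T) = ((a' : ℝ) : AddCircle T) := by
      rw [← hab']; exact AddCircle.coe_add_period T a'
    have hFb : F b = F a' := by rw [hFdef]; simp only; rw [hcoeB]
    -- rewrite the G-integral
    have eG1 : (∫ x in a'..a, (fourier (-n) (x : AddCircle T)) * G x)
        = ∫ x in a'..a, (f (2*a - x) : ℂ) * fourier (-n) (x : AddCircle T) := by
      refine intervalIntegral.integral_congr fun x hx => ?_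
      rw [Set.uIcc_of_le ha'a] at hx
      simp only [hGdef]
      rw [hGr_left x hx, hg0_refl x hx]
      ring
    have eG2 : (∫ x in a..b, (fourier (-n) (x : AddCircle T)) * G x)
        = ∫ x in a..b, (f x : ℂ) * fourier (-n) (x : AddCircle T) := by
      refine intervalIntegral.integral_congr fun x hx => ?_
      rw [Set.uIcc_of_le hab.le] at hx
      simp only [hGdef]
      rw [hGr_Icc x hx]
      ring
    -- derivative integrals in terms of J1 J2
    have hJ1F : (∫ x in a'..a, (-(f' (2*a - x)) : ℂ) * F x) = c0 * J1 := by
      rw [hJ1def, ← intervalIntegral.integral_const_mul]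
      refine intervalIntegral.integral_congr fun x hx => ?_
      rw [hFdef]
      ring
    have hJ2F : (∫ x in a..b, (f' x : ℂ) * F x) = c0 * J2 := by
      rw [hJ2def, ← intervalIntegral.integral_const_mul]
      refine intervalIntegral.integral_congr fun x hx => ?_
      rw [hFdef]
      ring
    -- the H-integral equals J1 + J2
    have hH1 : IntervalIntegrable (fun x => (fourier (-n) (x : AddCircle T)) * H x) volume a' a := by
      rw [intervalIntegrable_iff_integrableOn_Ioc_of_le ha'a]
      refine IntegrableOn.congr_fun
        (((hfour_cont (-n)).continuousOn.mul hrefl_cont).integrableOn_compact isCompact_Icc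
          |>.mono_set Set.Ioc_subset_Icc_self) ?_ measurableSet_Ioc
      intro x hx
      show (fourier (-n) (x : AddCircle T)) * (-(f' (2*a - x)) : ℂ)
        = (fourier (-n) (x : AddCircle T)) * H x
      simp only [hHdef]
      rw [hHr_left x (Set.mem_Icc_of_Ioc hx), hg1_refl x (Set.mem_Icc_of_Ioc hx)]
      push_cast
      ring
    have hH2 : IntervalIntegrable (fun x => (fourier (-n) (x : AddCircle T)) * H x) volume a b := by
      rw [intervalIntegrable_iff_integrableOn_Ioc_of_le hab.le]
      refine IntegrableOn.congr_fun
        (((hfour_cont (-n)).mul (Complex.continuous_ofReal.comp hg1)).integrableOn_Ioc)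
        ?_ measurableSet_Ioc
      intro x hx
      show (fourier (-n) (x : AddCircle T)) * ((g1 x : ℝ) : ℂ)
        = (fourier (-n) (x : AddCircle T)) * H x
      simp only [hHdef, hHrdef, if_neg (not_le.mpr hx.1)]
    have hHsplit : (∫ x in a'..b, (fourier (-n) (x : AddCircle T)) * H x)
        = (∫ x in a'..a, (fourier (-n) (x : AddCircle T)) * H x)
          + ∫ x in a..b, (fourier (-n) (x : AddCircle T)) * H x :=
      (intervalIntegral.integral_add_adjacent_intervals hH1 hH2).symm
    have hHJ1 : (∫ x in a'..a, (fourier (-n) (x : AddCircle T)) * H x) = J1 := by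
      rw [hJ1def]
      refine intervalIntegral.integral_congr fun x hx => ?_
      rw [Set.uIcc_of_le ha'a] at hx
      simp only [hHdef]
      rw [hHr_left x hx, hg1_refl x hx]
      push_cast
      ring
    have hHJ2 : (∫ x in a..b, (fourier (-n) (x : AddCircle T)) * H x) = J2 := by
      rw [hJ2def, intervalIntegral.integral_of_le hab.le,
        intervalIntegral.integral_of_le hab.le]
      refine setIntegral_congr_fun measurableSet_Ioc fun x hx => ?_
      simp only [hHdef]
      rw [hHr_Ioc x hx]
    -- split the G integral and conclude
    have hGsplit : (∫ x in a'..b, (fourier (-n) (x : AddCircle T)) * G x)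
        = (∫ x in a'..a, (fourier (-n) (x : AddCircle T)) * G x)
          + ∫ x in a..b, (fourier (-n) (x : AddCircle T)) * G x :=
      (intervalIntegral.integral_add_adjacent_intervals
        (((hfour_cont (-n)).mul hG_cont).intervalIntegrable a' a)
        (((hfour_cont (-n)).mul hG_cont).intervalIntegrable a b)).symm
    -- rewrite boundary values in ibp1
    have haux1 : 2*a - a = a := by ring
    have haux2 : 2*a - a' = b := by rw [ha'def]; ring
    simp only [haux1, haux2] at ibp1
    -- assemble
    have hGval : (∫ x in a'..b, (fourier (-n) (x : AddCircle T)) * G x) = -(c0 * (J1 + J2)) := by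
      rw [hGsplit, eG1, eG2, ibp1, ibp2, hJ1F, hJ2F, hFb]
      ring
    have hHval : (∫ x in a'..b, (fourier (-n) (x : AddCircle T)) * H x) = J1 + J2 := by
      rw [hHsplit, hHJ1, hHJ2]
    rw [coeffG n, coeffH n, hGval, hHval]
    rw [Complex.real_smul, Complex.real_smul, hc0def]
    rw [show ((1/T : ℝ) : ℂ) = 1/((T:ℝ):ℂ) from by push_cast; ring]
    exact algebra_aux (J1+J2) _ _ _ _
  have hTpos : 0 < T := hTfact.out
  have hnorm2pi : ∀ n : ℤ, n ≠ 0 → ‖fourierCoeff Gc n‖ ≤ T/(2*π) * ‖fourierCoeff Hc n‖ := by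
    intro n hn
    rw [hrel n hn, norm_mul]
    have h1 : ‖(T:ℂ)/(2*(π:ℂ)*Complex.I*(n:ℂ))‖ = T/(2*π*|(n:ℝ)|) := by
      rw [norm_div]
      rw [show ‖((T:ℝ):ℂ)‖ = T by
        rw [Complex.norm_real, Real.norm_eq_abs, abs_of_pos hTfact.out]]
      congr 1
      simp only [norm_mul, Complex.norm_I]
      rw [show ‖(2:ℂ)‖ = 2 by norm_num, show ‖((π:ℝ):ℂ)‖ = π by
        rw [Complex.norm_real, Real.norm_eq_abs, abs_of_pos Real.pi_pos]]
      rw [show ‖((n:ℤ):ℂ)‖ = |(n:ℝ)| by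
        rw [show (((n:ℤ):ℂ)) = (((n:ℤ):ℝ):ℂ) by push_cast; ring, Complex.norm_real,
          Real.norm_eq_abs]]
      ring
    rw [h1]
    have hn1 : (1:ℝ) ≤ |(n:ℝ)| := by
      rw [show |(n:ℝ)| = ((|n| : ℤ) : ℝ) by push_cast; ring]
      exact_mod_cast Int.one_le_abs hn
    have hmono : T/(2*π*|(n:ℝ)|) ≤ T/(2*π) := by
      rw [show T/(2*π*|(n:ℝ)|) = (T/(2*π))/|(n:ℝ)| by ring]
      exact div_le_self (by positivity) hn1
    exact mul_le_mul_of_nonneg_right hmono (norm_nonneg _)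
  have key : ∀ n : ℤ, (2*π/T)^2 * ‖fourierCoeff Gc n‖^2 ≤ ‖fourierCoeff Hc n‖^2 := by
    intro n
    by_cases hn : n = 0
    · rw [hn, cg0]
      simp
    · have h := hnorm2pi n hn
      have hTne : T ≠ 0 := ne_of_gt hTfact.out
      have h2 : 2*π/T * ‖fourierCoeff Gc n‖ ≤ ‖fourierCoeff Hc n‖ := by
        have h3 := mul_le_mul_of_nonneg_left h (by positivity : (0:ℝ) ≤ 2*π/T)
        calc 2*π/T * ‖fourierCoeff Gc n‖
            ≤ 2*π/T * (T/(2*π) * ‖fourierCoeff Hc n‖) := h3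
          _ = ‖fourierCoeff Hc n‖ := by field_simp
      calc (2*π/T)^2 * ‖fourierCoeff Gc n‖^2 = (2*π/T * ‖fourierCoeff Gc n‖)^2 := by ring
        _ ≤ ‖fourierCoeff Hc n‖^2 := pow_le_pow_left₀ (by positivity) h2 2
  have sumG2 : Summable (fun n : ℤ => (2*π/T)^2 * ‖fourierCoeff Gc n‖^2) :=
    Summable.of_nonneg_of_le (fun n => by positivity) key sumH
  have hts : (2*π/T)^2 * (∑' n : ℤ, ‖fourierCoeff Gc n‖^2) ≤ ∑' n : ℤ, ‖fourierCoeff Hc n‖^2 := by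
    rw [← tsum_mul_left]
    exact Summable.tsum_le_tsum key sumG2 sumH
  have hTne : T ≠ 0 := ne_of_gt hTfact.out
  have e1 : (∑' n : ℤ, ‖fourierCoeff Gc n‖^2) = 2/T * ∫ x in a..b, (f x)^2 := by
    rw [parsevalG, JG]; ring
  have e2 : (∑' n : ℤ, ‖fourierCoeff Hc n‖^2) = 2/T * ∫ x in a..b, (f' x)^2 := by
    rw [parsevalH, JH]; ring
  rw [e1, e2] at hts
  rw [ge_iff_le]
  have hpib : π/(b-a) = 2*π/T := by
    rw [hTdef]; field_simp
  rw [hpib]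
  have h5 := mul_le_mul_of_nonneg_left hts (by positivity : (0:ℝ) ≤ T/2)
  calc (2*π/T)^2 * ∫ x in a..b, (f x)^2
      = T/2 * ((2*π/T)^2 * (2/T * ∫ x in a..b, (f x)^2)) := by field_simp
    _ ≤ T/2 * (2/T * ∫ x in a..b, (f' x)^2) := h5
    _ = ∫ x in a..b, (f' x)^2 := by field_simp
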